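/- Let (V, ‖·‖) be a normed vector space, ε > 0, and Θ ⊆ V convex with 0 ∈ Θ. Let x be in the relative interior of B_Θ(0, 4ε) (so x ∈ Θ and ‖x‖ < 4ε), let y ∈ Θ ∖ B_Θ(0, 12ε) (so y ∈ Θ and ‖y‖ > 12ε), and let W be a (2ε − ‖x‖/2)-cover of ∂B_Θ(x, 4ε − ‖x‖)[x, Θ ∖ B_Θ(0, 12ε)]. Then there exists w ∈ W such that, for λ ≥ 0 satisfying ‖x + λ(w − x)‖ = 4ε, one has ‖y − (x + λ(w − x))‖ ≤ ‖y − x‖ − (2ε − ‖x‖/2). -/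

import Mathlib

section GeomDefs

variable {V : Type*} [NormedAddCommGroup V] [NormedSpace ℝ V]

/-- The relative boundary `∂S = closure S \ relint S` of a set. -/
def relBoundary (S : Set V) : Set V := closure S \ intrinsicInterior ℝ S

/-- `S[a, B]`: the intersection of `S` with all line segments from `a` to points of `B`. -/
def segBetween (S : Set V) (a : V) (B : Set V) : Set V :=
  S ∩ ⋃ b ∈ B, segment ℝ a b

/-- Minimum cardinality of an internal `δ`-cover of `Θ`; `⊤` if no finite cover exists. -/
noncomputable def coverNum (Θ : Set V) (δ : ℝ) : ℕ∞ :=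
  sInf {x : ℕ∞ | ∃ X : Finset V, ↑X ⊆ Θ ∧ (∀ θ ∈ Θ, ∃ v ∈ X, ‖θ - v‖ ≤ δ) ∧ x = (X.card : ℕ∞)}

/-- `X` is an internal `δ`-cover of `T`. -/
def IsCoverOf (X T : Set V) (δ : ℝ) : Prop :=
  X ⊆ T ∧ ∀ t ∈ T, ∃ x ∈ X, ‖t - x‖ ≤ δ

end GeomDefs

section Helpers
open Metric Set Filter
variable {V : Type*} [NormedAddCommGroup V] [NormedSpace ℝ V]

lemma mem_intrinsicInterior_iff' {s : Set V} {w : V} (hw : w ∈ affineSpan ℝ s) :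
    w ∈ intrinsicInterior ℝ s ↔
      ∃ U : Set V, IsOpen U ∧ w ∈ U ∧ U ∩ (affineSpan ℝ s : Set V) ⊆ s := by
  rw [intrinsicInterior]
  constructor
  · rintro ⟨t, ht, rfl⟩
    rw [mem_interior_iff_mem_nhds, nhds_subtype, Filter.mem_comap] at ht
    obtain ⟨U, hU, hUs⟩ := ht
    obtain ⟨U', hU'U, hU'open, htU'⟩ := _root_.mem_nhds_iff.mp hU
    refine ⟨U', hU'open, htU', ?_⟩
    rintro v ⟨hv1, hv2⟩
    exact hUs (show (⟨v, hv2⟩ : affineSpan ℝ s) ∈ (↑) ⁻¹' U from hU'U hv1)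
  · rintro ⟨U, hUopen, hwU, hsub⟩
    refine ⟨⟨w, hw⟩, ?_, rfl⟩
    rw [mem_interior_iff_mem_nhds, nhds_subtype, Filter.mem_comap]
    exact ⟨U, hUopen.mem_nhds hwU, fun t htU => hsub ⟨htU, t.2⟩⟩

lemma affSpan_inter_closedBall {Θ : Set V} (hconv : Convex ℝ Θ) {c : V} (hc : c ∈ Θ)
    {ρ : ℝ} (hρ : 0 < ρ) :
    affineSpan ℝ (Θ ∩ Metric.closedBall c ρ) = affineSpan ℝ Θ := by
  refine le_antisymm (affineSpan_mono ℝ inter_subset_left) ?_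
  rw [affineSpan_le]
  intro θ hθ
  by_cases hθc : θ = c
  · subst hθc; exact subset_affineSpan ℝ _ ⟨hc, mem_closedBall_self hρ.le⟩
  · have hne : 0 < ‖θ - c‖ := by
      rw [norm_pos_iff]; exact sub_ne_zero_of_ne hθc
    set t : ℝ := min 1 (ρ / ‖θ - c‖) with ht
    have ht0 : 0 < t := lt_min one_pos (div_pos hρ hne)
    have ht1 : t ≤ 1 := min_le_left _ _
    have hp : c + t • (θ - c) ∈ Θ ∩ Metric.closedBall c ρ := by
      constructor
      · have := hconv hc hθ (by linarith : (0:ℝ) ≤ 1 - t) ht0.le (by ring)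
        convert this using 1
        module
      · rw [Metric.mem_closedBall, dist_eq_norm]
        have h1 : c + t • (θ - c) - c = t • (θ - c) := by abel
        rw [h1, norm_smul, Real.norm_of_nonneg ht0.le]
        calc t * ‖θ - c‖ ≤ (ρ / ‖θ - c‖) * ‖θ - c‖ :=
              mul_le_mul_of_nonneg_right (min_le_right _ _) hne.le
          _ = ρ := div_mul_cancel₀ _ hne.ne'
    have hc' : c ∈ affineSpan ℝ (Θ ∩ Metric.closedBall c ρ) :=
      subset_affineSpan ℝ _ ⟨hc, mem_closedBall_self hρ.le⟩
    have hp' := subset_affineSpan ℝ _ hp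
    have hmem := AffineSubspace.smul_vsub_vadd_mem (affineSpan ℝ (Θ ∩ Metric.closedBall c ρ))
      t⁻¹ hp' hc' hc'
    have : t⁻¹ • (c + t • (θ - c) -ᵥ c) +ᵥ c = θ := by
      rw [vsub_eq_sub, vadd_eq_add, add_sub_cancel_left, smul_smul,
        inv_mul_cancel₀ ht0.ne', one_smul]
      abel
    rwa [this] at hmem

lemma norm_eq_of_mem_segBetween {Θ : Set V} (hconv : Convex ℝ Θ) (h0 : (0:V) ∈ Θ)
    {ε : ℝ} (hε : 0 < ε) {x : V}
    (hxrel : x ∈ intrinsicInterior ℝ (Θ ∩ Metric.closedBall 0 (4*ε)))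
    (hxΘ : x ∈ Θ) (hxlt : ‖x‖ < 4*ε)
    {w : V} (hw : w ∈ segBetween (relBoundary (Θ ∩ Metric.closedBall x (4*ε - ‖x‖))) x
        (Θ \ (Θ ∩ Metric.closedBall 0 (12*ε)))) :
    ‖w - x‖ = 4*ε - ‖x‖ := by
  set r : ℝ := 4*ε - ‖x‖ with hr
  have hr0 : 0 < r := by simp [hr]; linarith
  obtain ⟨hwB, hwseg⟩ := hw
  -- upper bound
  have hle : ‖w - x‖ ≤ r := by
    have h1 : w ∈ Metric.closedBall x r := by
      have := hwB.1
      have h2 : closure (Θ ∩ Metric.closedBall x r) ⊆ Metric.closedBall x r :=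
        closure_minimal inter_subset_right Metric.isClosed_closedBall
      exact h2 this
    rwa [Metric.mem_closedBall, dist_eq_norm] at h1
  rcases eq_or_lt_of_le hle with h | hlt
  · exact h
  exfalso
  -- extract segment data
  simp only [mem_iUnion] at hwseg
  obtain ⟨b, hbmem, hwsegb⟩ := hwseg
  have hbΘ : b ∈ Θ := hbmem.1
  have hbnorm : 12*ε < ‖b‖ := by
    by_contra h
    push_neg at h
    exact hbmem.2 ⟨hbΘ, by simpa [Metric.mem_closedBall, dist_zero_right] using h⟩
  obtain ⟨a, c, ha, hc, hac, hwab⟩ := hwsegb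
  have ha' : a = 1 - c := by linarith
  have hwx : w - x = c • (b - x) := by
    rw [← hwab, ha']; module
  have hbx : 8*ε < ‖b - x‖ := by
    have := norm_sub_norm_le b x
    linarith [this]
  have hc1 : c < 1 := by
    by_contra h
    push_neg at h
    have : ‖w - x‖ = c * ‖b - x‖ := by
      rw [hwx, norm_smul, Real.norm_of_nonneg hc]
    nlinarith [mul_nonneg (by linarith : (0:ℝ) ≤ c - 1) (norm_nonneg (b-x)), norm_nonneg x]
  -- spans
  have keyA1 := affSpan_inter_closedBall hconv h0 (by linarith : (0:ℝ) < 4*ε)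
  have keyA2 := affSpan_inter_closedBall hconv hxΘ hr0
  -- x in span of the 4ε set
  have hxspan : x ∈ affineSpan ℝ (Θ ∩ Metric.closedBall 0 (4*ε)) :=
    subset_affineSpan ℝ _ ⟨hxΘ, by simpa [Metric.mem_closedBall, dist_zero_right] using hxlt.le⟩
  obtain ⟨U₀, hU₀open, hxU₀, hU₀sub⟩ := (mem_intrinsicInterior_iff' hxspan).mp hxrel
  rw [keyA1] at hU₀sub
  -- the affine map f
  set f : V → V := fun v => (1 - c)⁻¹ • (v - c • b) with hf
  have hfc : Continuous f := (continuous_id.sub continuous_const).const_smul _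
  have hc1' : (1 - c) ≠ 0 := ne_of_gt (by linarith : (0:ℝ) < 1 - c)
  have hfw : f w = x := by
    show (1 - c)⁻¹ • (w - c • b) = x
    rw [← hwab, ha']
    rw [show (1 - c) • x + c • b - c • b = (1-c) • x by abel]
    rw [smul_smul, inv_mul_cancel₀ hc1', one_smul]
  set U : Set V := f ⁻¹' U₀ ∩ Metric.ball x r with hU
  have hwU : w ∈ U := by
    constructor
    · simp only [mem_preimage, hfw]; exact hxU₀
    · rwa [Metric.mem_ball, dist_eq_norm]
  have hwspan : w ∈ affineSpan ℝ (Θ ∩ Metric.closedBall x r) := by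
    rw [keyA2]
    have hxs : x ∈ affineSpan ℝ Θ := subset_affineSpan ℝ _ hxΘ
    have hbs : b ∈ affineSpan ℝ Θ := subset_affineSpan ℝ _ hbΘ
    have hmem := AffineSubspace.smul_vsub_vadd_mem (affineSpan ℝ Θ) c hbs hxs hxs
    have : c • (b -ᵥ x) +ᵥ x = w := by
      rw [vsub_eq_sub, vadd_eq_add, ← hwab, ha']; module
    rwa [this] at hmem
  have : w ∈ intrinsicInterior ℝ (Θ ∩ Metric.closedBall x r) := by
    rw [mem_intrinsicInterior_iff' hwspan]
    refine ⟨U, hU₀open.preimage hfc |>.inter Metric.isOpen_ball, hwU, ?_⟩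
    rintro v ⟨⟨hv1, hv2⟩, hvspan⟩
    rw [keyA2] at hvspan
    have hfvspan : f v ∈ affineSpan ℝ Θ := by
      have hbs : b ∈ affineSpan ℝ Θ := subset_affineSpan ℝ _ hbΘ
      have hmem := AffineSubspace.smul_vsub_vadd_mem (affineSpan ℝ Θ) (1-c)⁻¹ hvspan hbs hbs
      have : (1-c)⁻¹ • (v -ᵥ b) +ᵥ b = f v := by
        show (1-c)⁻¹ • (v - b) + b = (1 - c)⁻¹ • (v - c • b)
        match_scalars <;> (try field_simp) <;> (try ring)
      rwa [this] at hmem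
    have hfvΘ : f v ∈ Θ := (hU₀sub ⟨hv1, hfvspan⟩).1
    have hvΘ : v ∈ Θ := by
      have := hconv hfvΘ hbΘ (by linarith : (0:ℝ) ≤ 1 - c) hc (by ring)
      have heq : (1 - c) • f v + c • b = v := by
        show (1 - c) • ((1 - c)⁻¹ • (v - c • b)) + c • b = v
        rw [smul_smul, mul_inv_cancel₀ hc1', one_smul]
        abel
      rwa [heq] at this
    exact ⟨hvΘ, Metric.ball_subset_closedBall hv2⟩
  exact hwB.2 this

end Helpers


/-- Let `Θ` be convex with `0 ∈ Θ`, `x` in the relative interior of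
`B_Θ(0, 4ε)` (so `x ∈ Θ` and `‖x‖ < 4ε`), `y ∈ Θ ∖ B_Θ(0, 12ε)` (so `y ∈ Θ` and
`‖y‖ > 12ε`), and `W` a `(2ε - ‖x‖/2)`-cover of `∂B_Θ(x, 4ε - ‖x‖)[x, Θ ∖ B_Θ(0, 12ε)]`.
Then some `w ∈ W` satisfies: for every `λ ≥ 0` with `‖x + λ(w - x)‖ = 4ε`,
`‖y - (x + λ(w - x))‖ ≤ ‖y - x‖ - (2ε - ‖x‖/2)`. -/
theorem statement11 {V : Type*} [NormedAddCommGroup V] [NormedSpace ℝ V]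
    (ε : ℝ) (hε : 0 < ε) (Θ : Set V) (hconv : Convex ℝ Θ) (h0 : (0 : V) ∈ Θ)
    (x : V) (hxrel : x ∈ intrinsicInterior ℝ (Θ ∩ Metric.closedBall 0 (4 * ε)))
    (hxΘ : x ∈ Θ) (hxlt : ‖x‖ < 4 * ε)
    (y : V) (hyΘ : y ∈ Θ) (hygt : 12 * ε < ‖y‖)
    (W : Set V)
    (hW : IsCoverOf W
      (segBetween (relBoundary (Θ ∩ Metric.closedBall x (4 * ε - ‖x‖))) x
        (Θ \ (Θ ∩ Metric.closedBall 0 (12 * ε))))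
      (2 * ε - ‖x‖ / 2)) :
    ∃ w ∈ W, ∀ lam : ℝ, 0 ≤ lam → ‖x + lam • (w - x)‖ = 4 * ε →
      ‖y - (x + lam • (w - x))‖ ≤ ‖y - x‖ - (2 * ε - ‖x‖ / 2) := by
  obtain ⟨hWsub, hWcov⟩ := hW

  have hx0 : 0 ≤ ‖x‖ := norm_nonneg x
  set r : ℝ := 4 * ε - ‖x‖ with hrdef
  set δ : ℝ := 2 * ε - ‖x‖ / 2 with hδdef
  have hr0 : 0 < r := by simp only [hrdef]; linarith
  have hδ0 : 0 < δ := by simp only [hδdef]; linarith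
  have hr2δ : r = 2 * δ := by simp only [hrdef, hδdef]; ring
  set d : ℝ := ‖y - x‖ with hddef
  have hd8 : 8 * ε < d := by
    have := norm_sub_norm_le y x
    simp only [hddef]; linarith
  have hd0 : 0 < d := by linarith
  have hrd : r < d := by linarith
  set μ : ℝ := r / d with hμdef
  have hμ0 : 0 < μ := div_pos hr0 hd0
  have hμ1 : μ ≤ 1 := by rw [hμdef, div_le_one hd0]; linarith
  set z : V := x + μ • (y - x) with hzdef
  have hzseg : z ∈ segment ℝ x y := by
    refine ⟨1 - μ, μ, by linarith, hμ0.le, by ring, ?_⟩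
    simp only [hzdef]; module
  have hzΘ : z ∈ Θ := hconv.segment_subset hxΘ hyΘ hzseg
  have hzx : ‖z - x‖ = r := by
    simp only [hzdef, add_sub_cancel_left, norm_smul, Real.norm_of_nonneg hμ0.le,
      ← hddef, hμdef]
    rw [Real.norm_of_nonneg (div_pos hr0 hd0).le]
    field_simp
  have keyA2 := affSpan_inter_closedBall hconv hxΘ hr0
  have hyspan : y ∈ affineSpan ℝ Θ := subset_affineSpan ℝ _ hyΘ
  have hxspan : x ∈ affineSpan ℝ Θ := subset_affineSpan ℝ _ hxΘ
  -- z is in the set T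
  have hzball : z ∈ Θ ∩ Metric.closedBall x r :=
    ⟨hzΘ, by rw [Metric.mem_closedBall, dist_eq_norm, hzx]⟩
  have hznotint : z ∉ intrinsicInterior ℝ (Θ ∩ Metric.closedBall x r) := by
    intro h
    have hzspan : z ∈ affineSpan ℝ (Θ ∩ Metric.closedBall x r) := subset_affineSpan ℝ _ hzball
    obtain ⟨U, hUopen, hzU, hUsub⟩ := (mem_intrinsicInterior_iff' hzspan).mp h
    obtain ⟨ν, hν0, hνsub⟩ := Metric.isOpen_iff.mp hUopen z hzU
    set s : ℝ := μ + ν / (2 * d) with hsdef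
    set zs : V := x + s • (y - x) with hzsdef
    have hzsz : ‖zs - z‖ = ν / 2 := by
      have : zs - z = (ν / (2 * d)) • (y - x) := by
        simp only [hzsdef, hzdef, hsdef]; module
      rw [this, norm_smul, Real.norm_of_nonneg (by positivity), ← hddef]
      field_simp
    have hzsU : zs ∈ U := hνsub (by
      rw [Metric.mem_ball, dist_eq_norm, hzsz]; linarith)
    have hzsspan : zs ∈ affineSpan ℝ (Θ ∩ Metric.closedBall x r) := by
      rw [keyA2]
      have hmem := AffineSubspace.smul_vsub_vadd_mem (affineSpan ℝ Θ) s hyspan hxspan hxspan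
      have : s • (y -ᵥ x) +ᵥ x = zs := by
        rw [vsub_eq_sub, vadd_eq_add, hzsdef]; abel
      rwa [this] at hmem
    have hzsball : zs ∈ Θ ∩ Metric.closedBall x r := hUsub ⟨hzsU, hzsspan⟩
    have : ‖zs - x‖ ≤ r := by
      have := hzsball.2
      rwa [Metric.mem_closedBall, dist_eq_norm] at this
    have hzsx : ‖zs - x‖ = s * d := by
      simp only [hzsdef, add_sub_cancel_left, norm_smul, ← hddef,
        Real.norm_of_nonneg (by positivity : (0:ℝ) ≤ s)]
    rw [hzsx, hsdef, hμdef] at this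
    have : (r / d + ν / (2 * d)) * d = r + ν / 2 := by field_simp
    nlinarith [this]
  have hzT : z ∈ segBetween (relBoundary (Θ ∩ Metric.closedBall x r)) x
      (Θ \ (Θ ∩ Metric.closedBall 0 (12 * ε))) := by
    refine ⟨⟨subset_closure hzball, hznotint⟩, ?_⟩
    simp only [Set.mem_iUnion]
    refine ⟨y, ⟨hyΘ, ?_⟩, hzseg⟩
    rintro ⟨-, hy2⟩
    rw [Metric.mem_closedBall, dist_zero_right] at hy2
    linarith
  obtain ⟨w, hwW, hwz⟩ := hWcov z hzT
  refine ⟨w, hwW, ?_⟩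
  intro lam hlam hnorm
  have hwT := hWsub hwW
  have hwx : ‖w - x‖ = r := norm_eq_of_mem_segBetween hconv h0 hε hxrel hxΘ hxlt hwT
  set p : V := x + lam • (w - x) with hpdef
  have hpx : ‖p - x‖ = lam * r := by
    simp only [hpdef, add_sub_cancel_left, norm_smul, Real.norm_of_nonneg hlam, hwx]
  have hplow : r ≤ lam * r := by
    have h1 := norm_sub_norm_le p x
    rw [hpx, hnorm] at h1
    linarith [hrdef]
  have hlam1 : 1 ≤ lam := by
    have := (mul_le_mul_iff_left₀ hr0).mp (by linarith : 1 * r ≤ lam * r)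
    linarith
  have hphigh : lam * r ≤ 4 * ε + ‖x‖ := by
    have h1 := norm_sub_le p x
    rw [hpx, hnorm] at h1
    linarith
  have hlamrd : lam * r < d := by linarith
  -- the comparison point z' on the segment [x, y]
  set z' : V := x + (lam * μ) • (y - x) with hz'def
  have hyz' : ‖y - z'‖ = d - lam * r := by
    have h1 : y - z' = (1 - lam * μ) • (y - x) := by
      simp only [hz'def]; module
    have h2 : lam * μ * d = lam * r := by
      rw [hμdef]; field_simp
    rw [h1, norm_smul, Real.norm_of_nonneg, ← hddef]
    · nlinarith [h2]
    · have : lam * μ < 1 := by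
        rw [← mul_lt_mul_iff_left₀ hd0] at *
        rw [one_mul]
        linarith [h2]
      linarith
  have hpz' : ‖p - z'‖ ≤ lam * δ := by
    have h1 : p - z' = lam • (w - z) := by
      simp only [hpdef, hz'def, hzdef]; module
    rw [h1, norm_smul, Real.norm_of_nonneg hlam]
    have : ‖w - z‖ ≤ δ := by
      rw [norm_sub_rev] at hwz; exact hwz
    exact mul_le_mul_of_nonneg_left this hlam
  calc ‖y - p‖ ≤ ‖y - z'‖ + ‖z' - p‖ := by
        have h := dist_triangle y z' p
        simpa [dist_eq_norm] using h
    _ = (d - lam * r) + ‖p - z'‖ := by rw [hyz', norm_sub_rev]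
    _ ≤ (d - lam * r) + lam * δ := by linarith
    _ ≤ d - δ := by
        have h3 : δ ≤ lam * δ := le_mul_of_one_le_left hδ0.le hlam1
        have h4 : lam * r = 2 * (lam * δ) := by rw [hr2δ]; ring
        linarith
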